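/- (Negligible VB mass on irregular large-L₂-error DNNs under Hellinger control.) Let 0 < κ ≤ 1, γₙ → ∞, and suppose θ satisfies: (i) E_X[(f_θ(X) − f_0(X))² 1{(f_θ(X)−f_0(X))² ≤ γₙ L₂²}] ≥ κ L₂², where L₂² = E_X(f_θ(X) − f_0(X))², and (ii) L₂² ≥ M̃ₙ ε̃ₙ² with γₙ M̃ₙ ε̃ₙ² = o(1). Then d²(P_θ, P₀) ≥ c_M · M̃ₙ ε̃ₙ² for some constant c_M > 0 (for all large n), where d²(P_θ,P₀) = E_X[1 − exp(−(f_θ(X)−f_0(X))²/(8σ²))]. -/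

import Mathlib

open MeasureTheory Real Filter

private lemma key_ineq {u a : ℝ} (hu : 0 ≤ u) (hua : u ≤ a) (ha : 0 < a) :
    (1 - Real.exp (-a)) / a * u ≤ 1 - Real.exp (-u) := by
  have hw1 : (0:ℝ) ≤ u / a := by positivity
  have hw2 : (0:ℝ) ≤ 1 - u / a := by
    rw [sub_nonneg]; exact div_le_one_of_le₀ hua ha.le
  have hw3 : u / a + (1 - u / a) = 1 := by ring
  have hconv : Real.exp ((u/a) • (-a) + (1 - u/a) • (0:ℝ)) ≤
      (u/a) * Real.exp (-a) + (1 - u/a) * Real.exp 0 :=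
    convexOn_exp.2 (Set.mem_univ (-a)) (Set.mem_univ 0) hw1 hw2 hw3
  simp only [smul_eq_mul, mul_zero, add_zero, Real.exp_zero, mul_one] at hconv
  have h1 : u / a * -a = -u := by field_simp
  rw [h1] at hconv
  have : Real.exp (-u) ≤ u / a * Real.exp (-a) + (1 - u / a) := hconv
  have ha' : a ≠ 0 := ha.ne'
  have h2 : Real.exp (-u) * a ≤ (u / a * Real.exp (-a) + (1 - u / a)) * a :=
    mul_le_mul_of_nonneg_right this ha.le
  have h3 : (u / a * Real.exp (-a) + (1 - u / a)) * a = u * Real.exp (-a) + (a - u) := by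
    field_simp
  rw [h3] at h2
  rw [div_mul_eq_mul_div, div_le_iff₀ ha]
  nlinarith

/-- Regular DNNs with large L₂ error have Hellinger distance bounded below: if
`E_X[(f−g)² 1{(f−g)² ≤ γₙL₂²}] ≥ κ L₂²` and `L₂² ≥ M̃ₙ ε̃ₙ²` with `γₙ → ∞` and
`γₙ M̃ₙ ε̃ₙ² = o(1)`, then `d²(P_θ,P₀) ≥ c_M M̃ₙ ε̃ₙ²` for all large `n`. -/
theorem hellinger_lower_bound_regular (p : ℕ) (σ : ℝ) (hσ : 0 < σ)
    (μ : Measure (Fin p → ℝ)) [IsProbabilityMeasure μ]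
    (κ : ℝ) (hκ0 : 0 < κ) (hκ1 : κ ≤ 1)
    (γ M e : ℕ → ℝ)
    (hγ : Tendsto γ atTop atTop)
    (hMe : ∀ n, 0 < M n * e n)
    (ho : Tendsto (fun n => γ n * (M n * e n)) atTop (nhds 0)) :
    ∃ c > (0 : ℝ), ∀ᶠ n in atTop, ∀ f g : (Fin p → ℝ) → ℝ,
      Measurable f → Measurable g →
      Integrable (fun x => (f x - g x) ^ 2) μ →
      (κ * (∫ x, (f x - g x) ^ 2 ∂μ) ≤
        ∫ x in {x | (f x - g x) ^ 2 ≤ γ n * ∫ y, (f y - g y) ^ 2 ∂μ},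
          (f x - g x) ^ 2 ∂μ) →
      (M n * e n ≤ ∫ x, (f x - g x) ^ 2 ∂μ) →
      c * (M n * e n) ≤ ∫ x, (1 - Real.exp (-((f x - g x) ^ 2) / (8 * σ ^ 2))) ∂μ := by
  have hT : (0:ℝ) < 8 * σ ^ 2 := by positivity
  have hexp1 : Real.exp (-1) < 1 := by
    rw [Real.exp_lt_one_iff]; norm_num
  refine ⟨κ * (1 - Real.exp (-1)) / (8 * σ ^ 2), div_pos (mul_pos hκ0 (by linarith)) hT, ?_⟩
  have hev1 : ∀ᶠ n in atTop, 1 ≤ γ n := hγ.eventually_ge_atTop 1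
  have hev2 : ∀ᶠ n in atTop, γ n * (M n * e n) < 8 * σ ^ 2 :=
    ho.eventually (gt_mem_nhds hT)
  filter_upwards [hev1, hev2] with n hγ1 hsmall f g hf hg hInt hκint hL
  set T := 8 * σ ^ 2 with hTdef
  set L := ∫ x, (f x - g x) ^ 2 ∂μ with hLdef
  have hL0 : 0 < L := lt_of_lt_of_le (hMe n) hL
  have hγ0 : 0 < γ n := lt_of_lt_of_le one_pos hγ1
  set a := γ n * L / T with hadef
  have ha0 : 0 < a := by positivity
  set A : Set (Fin p → ℝ) := {x | (f x - g x) ^ 2 ≤ γ n * L} with hAdef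
  have hDmeas : Measurable fun x => (f x - g x) ^ 2 := (hf.sub hg).pow_const 2
  have hAmeas : MeasurableSet A := measurableSet_le hDmeas measurable_const
  -- integrability of the exp term
  have hExpInt : Integrable (fun x => Real.exp (-((f x - g x) ^ 2) / T)) μ := by
    apply (integrable_const (1:ℝ)).mono'
    · exact (Real.measurable_exp.comp (hDmeas.neg.div_const _)).aestronglyMeasurable
    · refine Filter.Eventually.of_forall fun x => ?_
      rw [Real.norm_eq_abs, abs_of_nonneg (Real.exp_nonneg _)]
      rw [Real.exp_le_one_iff]
      exact div_nonpos_of_nonpos_of_nonneg (neg_nonpos.2 (sq_nonneg _)) hT.le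
  have hHInt : Integrable (fun x => 1 - Real.exp (-((f x - g x) ^ 2) / T)) μ :=
    (integrable_const 1).sub hExpInt
  have hHnonneg : ∀ x, 0 ≤ 1 - Real.exp (-((f x - g x) ^ 2) / T) := by
    intro x
    have : Real.exp (-((f x - g x) ^ 2) / T) ≤ 1 := by
      rw [Real.exp_le_one_iff]
      exact div_nonpos_of_nonpos_of_nonneg (neg_nonpos.2 (sq_nonneg _)) hT.le
    linarith
  -- step 1 : restrict to A
  have step1 : ∫ x in A, (1 - Real.exp (-((f x - g x) ^ 2) / T)) ∂μ ≤
      ∫ x, (1 - Real.exp (-((f x - g x) ^ 2) / T)) ∂μ :=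
    setIntegral_le_integral hHInt (Filter.Eventually.of_forall hHnonneg)
  -- step 2 : pointwise bound on A
  have step2 : ∫ x in A, ((1 - Real.exp (-a)) / (a * T)) * (f x - g x) ^ 2 ∂μ ≤
      ∫ x in A, (1 - Real.exp (-((f x - g x) ^ 2) / T)) ∂μ := by
    apply setIntegral_mono_on ((hInt.const_mul _).integrableOn) (hHInt.integrableOn) hAmeas
    intro x hx
    have hxA : (f x - g x) ^ 2 ≤ γ n * L := hx
    have hkey := key_ineq (u := (f x - g x) ^ 2 / T) (a := a)
      (by positivity) (by rw [hadef]; exact div_le_div_of_nonneg_right hxA hT.le) ha0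
    have h1 : -((f x - g x) ^ 2) / T = -((f x - g x) ^ 2 / T) := by ring
    rw [h1]
    calc (1 - Real.exp (-a)) / (a * T) * (f x - g x) ^ 2
        = (1 - Real.exp (-a)) / a * ((f x - g x) ^ 2 / T) := by
          field_simp; try ring
      _ ≤ 1 - Real.exp (-((f x - g x) ^ 2 / T)) := hkey
  have hexpA : 0 ≤ 1 - Real.exp (-a) := by
    have : Real.exp (-a) ≤ 1 := by rw [Real.exp_le_one_iff]; linarith
    linarith
  -- step 3 : factor constant and use hκint
  have step3 : κ * (1 - Real.exp (-a)) / γ n ≤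
      ∫ x in A, ((1 - Real.exp (-a)) / (a * T)) * (f x - g x) ^ 2 ∂μ := by
    rw [integral_const_mul]
    have hfac : (1 - Real.exp (-a)) / (a * T) * (κ * L) = κ * (1 - Real.exp (-a)) / γ n := by
      rw [hadef]; field_simp
    calc κ * (1 - Real.exp (-a)) / γ n
        = (1 - Real.exp (-a)) / (a * T) * (κ * L) := hfac.symm
      _ ≤ (1 - Real.exp (-a)) / (a * T) * ∫ x in A, (f x - g x) ^ 2 ∂μ := by
          apply mul_le_mul_of_nonneg_left hκint (div_nonneg hexpA (by positivity))
  -- step 4 : the constant bound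
  have step4 : κ * (1 - Real.exp (-1)) / T * (M n * e n) ≤
      κ * (1 - Real.exp (-a)) / γ n := by
    rcases le_or_gt a 1 with hca | hca
    · have hk := key_ineq (u := a) (a := 1) ha0.le hca one_pos
      simp only [div_one] at hk
      -- 1 - exp(-a) ≥ (1 - exp(-1)) * a
      have h2 : κ * (1 - Real.exp (-1)) / T * (M n * e n) ≤
          κ * (1 - Real.exp (-1)) / T * L := by
        apply mul_le_mul_of_nonneg_left hL (div_nonneg (mul_nonneg hκ0.le (by linarith)) hT.le)
      have h3 : κ * (1 - Real.exp (-1)) / T * L = κ * ((1 - Real.exp (-1)) * a) / γ n := by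
        rw [hadef]; field_simp
      rw [h3] at h2
      refine h2.trans ?_
      apply div_le_div_of_nonneg_right _ hγ0.le
      exact mul_le_mul_of_nonneg_left hk hκ0.le
    · -- a > 1 : 1 - exp(-a) ≥ 1 - exp(-1), and γ (M e) < T
      have hmono : Real.exp (-a) ≤ Real.exp (-1) := Real.exp_le_exp.2 (by linarith)
      have h1 : κ * (1 - Real.exp (-1)) / T * (M n * e n) ≤
          κ * (1 - Real.exp (-1)) / γ n := by
        rw [div_mul_eq_mul_div, div_le_div_iff₀ hT hγ0]
        have hnn : 0 ≤ κ * (1 - Real.exp (-1)) := mul_nonneg hκ0.le (by linarith)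
        calc κ * (1 - Real.exp (-1)) * (M n * e n) * γ n
            = κ * (1 - Real.exp (-1)) * (γ n * (M n * e n)) := by ring
          _ ≤ κ * (1 - Real.exp (-1)) * T :=
            mul_le_mul_of_nonneg_left hsmall.le hnn
      refine h1.trans ?_
      apply div_le_div_of_nonneg_right _ hγ0.le
      apply mul_le_mul_of_nonneg_left _ hκ0.le
      linarith
  calc κ * (1 - Real.exp (-1)) / T * (M n * e n)
      ≤ κ * (1 - Real.exp (-a)) / γ n := step4
    _ ≤ ∫ x in A, ((1 - Real.exp (-a)) / (a * T)) * (f x - g x) ^ 2 ∂μ := step3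
    _ ≤ ∫ x in A, (1 - Real.exp (-((f x - g x) ^ 2) / T)) ∂μ := step2
    _ ≤ ∫ x, (1 - Real.exp (-((f x - g x) ^ 2) / T)) ∂μ := step1
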